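/- For every field K of characteristic zero, every q ∈ K, and every n ≥ 1, the family of operators (P_λ), indexed by all partitions λ (including the empty partition) having at most n parts, is linearly independent in the space of K-linear endomorphisms of K[x_1,…,x_n]. -/

import Mathlib

open MvPolynomial

/-- The `q`-Steenrod operator `P_k` on `K[x_1,…,x_n]`:
`P_k(p) = ∑ i, x_i^k • (p + q • x_i • ∂p/∂x_i)`. -/
noncomputable def steenrodP (K : Type) [Field K] (q : K) (n k : ℕ) :
    Module.End K (MvPolynomial (Fin n) K) :=
  ∑ i : Fin n, (LinearMap.mulLeft K (X i ^ k : MvPolynomial (Fin n) K)) ∘ₗ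
    (LinearMap.id + q • ((LinearMap.mulLeft K (X i : MvPolynomial (Fin n) K)) ∘ₗ
      (pderiv i).toLinearMap))

/-- The dual `q`-Steenrod operator `P_k^*` on `K[x_1,…,x_n]`:
`P_k^*(p) = ∑ i, (∂^k p/∂x_i^k + q • x_i • ∂^{k+1} p/∂x_i^{k+1})`. -/
noncomputable def steenrodPdual (K : Type) [Field K] (q : K) (n k : ℕ) :
    Module.End K (MvPolynomial (Fin n) K) :=
  ∑ i : Fin n,
    ((((pderiv i).toLinearMap : Module.End K (MvPolynomial (Fin n) K)) ^ k)
      + q • ((LinearMap.mulLeft K (X i : MvPolynomial (Fin n) K)) ∘ₗ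
          ((((pderiv i).toLinearMap : Module.End K (MvPolynomial (Fin n) K)) ^ (k+1) : Module.End K (MvPolynomial (Fin n) K)) : MvPolynomial (Fin n) K →ₗ[K] MvPolynomial (Fin n) K)))

/-- The bilinear form `B(p,r) = ∑_m m! ⬝ p_m ⬝ r_m` over exponent vectors `m`. -/
noncomputable def formB {K : Type} [Field K] {n : ℕ} (p r : MvPolynomial (Fin n) K) : K :=
  ∑ m ∈ p.support, (∏ i, ((m i).factorial : K)) * p.coeff m * r.coeff m

/-- `p` is `q`-harmonic if it is killed by all the dual `q`-Steenrod operators. -/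
def IsQHarmonic {K : Type} [Field K] {n : ℕ} (q : K) (p : MvPolynomial (Fin n) K) : Prop :=
  ∀ k : ℕ, 1 ≤ k → steenrodPdual K q n k p = 0

/-- The space of `q`-hit polynomials: the span of the ranges of the `P_k`, `k ≥ 1`. -/
noncomputable def qHit (K : Type) [Field K] (q : K) (n : ℕ) :
    Submodule K (MvPolynomial (Fin n) K) :=
  Submodule.span K (⋃ k ∈ {k : ℕ | 1 ≤ k}, Set.range (steenrodP K q n k))

/-- For a list `λ = [λ_1, …, λ_m]`, the operator `P_λ = P_{λ_1} ∘ ⋯ ∘ P_{λ_m}`. -/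
noncomputable def steenrodPList (K : Type) [Field K] (q : K) (n : ℕ) (l : List ℕ) :
    Module.End K (MvPolynomial (Fin n) K) :=
  (l.map (steenrodP K q n)).prod

section Aux
variable {K : Type} [Field K] {n : ℕ}

lemma coeff_X_mul_pderiv (i : Fin n) (p : MvPolynomial (Fin n) K) (v : Fin n →₀ ℕ) :
    coeff v (X i * pderiv i p) = (v i : K) * coeff v p := by
  induction p using MvPolynomial.induction_on' with
  | monomial u a =>
      rw [pderiv_monomial]
      by_cases hu : u i = 0
      · rw [hu, Nat.cast_zero, mul_zero, map_zero, mul_zero, coeff_zero, coeff_monomial]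
        split_ifs with h
        · subst h; rw [hu]; simp
        · ring
      · have h1 : Finsupp.single i 1 ≤ u := by
          rwa [Finsupp.single_le_iff, Nat.one_le_iff_ne_zero]
        rw [X, monomial_mul, one_mul, add_tsub_cancel_of_le h1, coeff_monomial, coeff_monomial]
        split_ifs with h
        · subst h; ring
        · ring
  | add p r hp hr =>
      rw [map_add, mul_add, coeff_add, coeff_add, hp, hr, mul_add]

lemma coeff_steenrodP (q : K) (k : ℕ) (p : MvPolynomial (Fin n) K) (v : Fin n →₀ ℕ) :
    coeff v (steenrodP K q n k p) =
      ∑ i : Fin n, (if Finsupp.single i k ≤ v then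
        (1 + q * ((v i - k : ℕ) : K)) * coeff (v - Finsupp.single i k) p else 0) := by
  classical
  rw [steenrodP, LinearMap.sum_apply, coeff_sum]
  refine Finset.sum_congr rfl fun i _ => ?_
  rw [LinearMap.comp_apply, LinearMap.mulLeft_apply, X_pow_eq_monomial, coeff_monomial_mul']
  split_ifs with h
  · rw [one_mul, LinearMap.add_apply, LinearMap.id_apply, LinearMap.smul_apply,
      LinearMap.comp_apply, LinearMap.mulLeft_apply]
    simp only [Derivation.coeFn_coe]
    rw [coeff_add, coeff_smul, coeff_X_mul_pderiv, smul_eq_mul]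
    have hvk : ((v - Finsupp.single i k) i : K) = ((v i - k : ℕ) : K) := by
      rw [Finsupp.tsub_apply, Finsupp.single_eq_same]
    rw [hvk]; ring
  · rfl

lemma steenrodPList_cons (q : K) (k : ℕ) (l : List ℕ) (p : MvPolynomial (Fin n) K) :
    steenrodPList K q n (k :: l) p = steenrodP K q n k (steenrodPList K q n l p) := by
  rw [steenrodPList, steenrodPList, List.map_cons, List.prod_cons, Module.End.mul_apply]

lemma card_support_sub_single (v : Fin n →₀ ℕ) (i : Fin n) (k : ℕ) :
    v.support.card ≤ (v - Finsupp.single i k).support.card + 1 := by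
  classical
  have hsub : v.support ⊆ (v - Finsupp.single i k).support ∪ {i} := by
    intro j hj
    rcases eq_or_ne j i with rfl | hji
    · exact Finset.mem_union_right _ (Finset.mem_singleton_self _)
    · apply Finset.mem_union_left
      rw [Finsupp.mem_support_iff] at hj ⊢
      rwa [Finsupp.tsub_apply, Finsupp.single_apply, if_neg (fun h => hji h.symm),
        Nat.sub_zero]
  calc v.support.card ≤ _ := Finset.card_le_card hsub
    _ ≤ _ := (Finset.card_union_le _ _).trans (by simp)

lemma support_subset_support_sub_single {v : Fin n →₀ ℕ} {i : Fin n} {k : ℕ}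
    (h : k ≤ v i) (hne : v i ≠ k) :
    v.support ⊆ (v - Finsupp.single i k).support := by
  intro j hj
  rw [Finsupp.mem_support_iff] at hj ⊢
  rcases eq_or_ne j i with rfl | hji
  · rw [Finsupp.tsub_apply, Finsupp.single_eq_same]
    omega
  · rwa [Finsupp.tsub_apply, Finsupp.single_apply, if_neg (fun h => hji h.symm), Nat.sub_zero]

lemma support_sub_single_eq {v : Fin n →₀ ℕ} {i : Fin n} {k : ℕ} (h : v i = k) :
    (v - Finsupp.single i k).support = v.support.erase i := by
  classical
  ext j
  rw [Finset.mem_erase, Finsupp.mem_support_iff, Finsupp.mem_support_iff, Finsupp.tsub_apply,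
    Finsupp.single_apply]
  rcases eq_or_ne j i with rfl | hji
  · simp [h]
  · rw [if_neg (Ne.symm hji), Nat.sub_zero]
    simp [hji]

lemma map_support_sub_single {v : Fin n →₀ ℕ} {i : Fin n} {k : ℕ}
    (h : v i = k) (hk : 1 ≤ k) :
    v.support.val.map v
      = k ::ₘ (v - Finsupp.single i k).support.val.map (v - Finsupp.single i k) := by
  classical
  have hi : i ∈ v.support := by rw [Finsupp.mem_support_iff, h]; omega
  have hval : v.support.val = i ::ₘ (v.support.erase i).val := by
    rw [Finset.erase_val]
    exact (Multiset.cons_erase hi).symm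
  rw [hval, Multiset.map_cons, h, support_sub_single_eq h]
  congr 1
  apply Multiset.map_congr rfl
  intro j hj
  have hji : j ≠ i := (Finset.mem_erase.1 hj).1
  rw [Finsupp.tsub_apply, Finsupp.single_apply, if_neg (fun hh => hji hh.symm), Nat.sub_zero]

/-- Lemma B : vanishing when the support is too big. -/
lemma coeff_steenrodPList_eq_zero (q : K) :
    ∀ (l : List ℕ) (v : Fin n →₀ ℕ), l.length < v.support.card →
      coeff v (steenrodPList K q n l 1) = 0 := by
  intro l
  induction l with
  | nil =>
      intro v hv
      have hv0 : v ≠ 0 := by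
        intro h; rw [h] at hv; simp at hv
      rw [steenrodPList, List.map_nil, List.prod_nil, Module.End.one_apply, coeff_one,
        if_neg (fun h => hv0 h.symm)]
  | cons k l ih =>
      intro v hv
      rw [steenrodPList_cons, coeff_steenrodP]
      apply Finset.sum_eq_zero
      intro i _
      split_ifs with h
      · rw [ih, mul_zero]
        have := card_support_sub_single v i k
        simp only [List.length_cons] at hv
        omega
      · rfl

/-- Lemma C : identification of the multiset of values in the tight case. -/
lemma multiset_eq_of_coeff_ne_zero (q : K) :
    ∀ (l : List ℕ), (∀ x ∈ l, 1 ≤ x) → ∀ (v : Fin n →₀ ℕ),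
      v.support.card = l.length → coeff v (steenrodPList K q n l 1) ≠ 0 →
      v.support.val.map v = ↑l := by
  intro l
  induction l with
  | nil =>
      intro _ v hcard _
      have h0 : v.support = ∅ := Finset.card_eq_zero.1 (by simpa using hcard)
      simp [h0]
  | cons k l ih =>
      intro hpos v hcard hne
      rw [steenrodPList_cons, coeff_steenrodP] at hne
      obtain ⟨i, _, hterm⟩ := Finset.exists_ne_zero_of_sum_ne_zero hne
      rw [ne_eq, ite_eq_right_iff, not_forall] at hterm
      obtain ⟨hle, hterm⟩ := hterm
      have hcoeff : coeff (v - Finsupp.single i k) (steenrodPList K q n l 1) ≠ 0 :=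
        fun h => hterm (by rw [h, mul_zero])
      have hki : k ≤ v i := by
        have := hle i
        simpa [Finsupp.single_eq_same] using Finsupp.single_le_iff.1 hle
      have hwcard : (v - Finsupp.single i k).support.card ≤ l.length := by
        by_contra hc
        exact hcoeff (coeff_steenrodPList_eq_zero q l _ (by omega))
      have hvik : v i = k := by
        by_contra hne2
        have hsub := support_subset_support_sub_single hki hne2
        have := Finset.card_le_card hsub
        simp only [List.length_cons] at hcard
        omega
      have hw : (v - Finsupp.single i k).support.card = l.length := by
        have h1 := card_support_sub_single v i k
        simp only [List.length_cons] at hcard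
        omega
      rw [map_support_sub_single hvik (hpos k (List.mem_cons_self)),
        ih (fun x hx => hpos x (List.mem_cons_of_mem _ hx)) _ hw hcoeff]
      rfl

/-- Lemma D : positivity of the diagonal coefficient. -/
lemma coeff_steenrodPList_self (q : K) :
    ∀ (l : List ℕ), (∀ x ∈ l, 1 ≤ x) → ∀ (v : Fin n →₀ ℕ),
      v.support.val.map v = ↑l →
      ∃ N : ℕ, 0 < N ∧ coeff v (steenrodPList K q n l 1) = N := by
  intro l
  induction l with
  | nil =>
      intro _ v hv
      have hsupp : v.support.card = 0 := by simpa using congrArg Multiset.card hv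
      have hv0 : v = 0 := Finsupp.support_eq_empty.1 (Finset.card_eq_zero.1 hsupp)
      refine ⟨1, Nat.one_pos, ?_⟩
      rw [hv0, steenrodPList, List.map_nil, List.prod_nil, Module.End.one_apply, coeff_one]
      simp
  | cons k l ih =>
      intro hpos v hv
      have hk1 : 1 ≤ k := hpos k (List.mem_cons_self)
      have hcard : v.support.card = l.length + 1 := by
        have := congrArg Multiset.card hv
        simpa using this
      have key : ∀ i : Fin n, ∃ N : ℕ,
          ((if Finsupp.single i k ≤ v then
            (1 + q * ((v i - k : ℕ) : K)) *
              coeff (v - Finsupp.single i k) (steenrodPList K q n l 1) else 0) = N)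
          ∧ (v i = k → 0 < N) := by
        intro i
        by_cases hik : v i = k
        · have hle : Finsupp.single i k ≤ v := Finsupp.single_le_iff.2 (le_of_eq hik.symm)
          have hmap : (v - Finsupp.single i k).support.val.map (v - Finsupp.single i k)
              = ↑l := by
            have := map_support_sub_single hik hk1
            rw [hv] at this
            have hcons : (k ::ₘ (↑l : Multiset ℕ)) = ↑(k :: l) := rfl
            rw [← hcons] at this
            exact (Multiset.cons_inj_right k).1 this.symm
          obtain ⟨N, hN, hNc⟩ := ih (fun x hx => hpos x (List.mem_cons_of_mem _ hx)) _ hmap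
          refine ⟨N, ?_, fun _ => hN⟩
          rw [if_pos hle, hNc, hik, Nat.sub_self, Nat.cast_zero, mul_zero, add_zero, one_mul]
        · by_cases hle : Finsupp.single i k ≤ v
          · have hki : k ≤ v i := Finsupp.single_le_iff.1 hle
            have hsub := support_subset_support_sub_single hki hik
            have hzero : coeff (v - Finsupp.single i k) (steenrodPList K q n l 1) = 0 := by
              apply coeff_steenrodPList_eq_zero
              have := Finset.card_le_card hsub
              omega
            exact ⟨0, by rw [if_pos hle, hzero, mul_zero, Nat.cast_zero], fun h => absurd h hik⟩
          · exact ⟨0, by rw [if_neg hle, Nat.cast_zero], fun h =>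
              absurd (Finsupp.single_le_iff.2 (le_of_eq h.symm)) hle⟩
      choose N hN hNpos using key
      have hex : ∃ i : Fin n, v i = k := by
        have hk : k ∈ v.support.val.map v := by rw [hv]; exact List.mem_cons_self
        obtain ⟨i, _, hi⟩ := Multiset.mem_map.1 hk
        exact ⟨i, hi⟩
      obtain ⟨i0, hi0⟩ := hex
      refine ⟨∑ i : Fin n, N i, ?_, ?_⟩
      · exact Finset.sum_pos' (fun _ _ => Nat.zero_le _)
          ⟨i0, Finset.mem_univ i0, hNpos i0 hi0⟩
      · rw [steenrodPList_cons, coeff_steenrodP, Nat.cast_sum]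
        exact Finset.sum_congr rfl fun i _ => hN i

noncomputable def listToFinsupp (l : List ℕ) (n : ℕ) : Fin n →₀ ℕ :=
  Finsupp.equivFunOnFinite.symm (fun i => l.getD i 0)

lemma listToFinsupp_apply (l : List ℕ) (i : Fin n) :
    listToFinsupp l n i = l.getD i 0 := rfl

lemma listToFinsupp_map (l : List ℕ) (hl : ∀ x ∈ l, 1 ≤ x) (hlen : l.length ≤ n) :
    (listToFinsupp l n).support.val.map (listToFinsupp l n) = ↑l := by
  classical
  set v := listToFinsupp l n with hv
  have happly : ∀ j : Fin l.length, v (Fin.castLE hlen j) = l.get j := by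
    intro j
    rw [listToFinsupp_apply]
    simp [List.getD_eq_getElem l 0 j.isLt, List.get_eq_getElem]
  have hsupp : v.support = Finset.map ⟨Fin.castLE hlen, Fin.castLE_injective hlen⟩
      Finset.univ := by
    ext i
    rw [Finsupp.mem_support_iff, Finset.mem_map]
    constructor
    · intro hi
      have hilt : (i : ℕ) < l.length := by
        by_contra hc
        exact hi (by rw [listToFinsupp_apply, List.getD_eq_default l 0 (by omega)])
      exact ⟨⟨i, hilt⟩, Finset.mem_univ _, by ext; simp⟩
    · rintro ⟨j, -, rfl⟩
      simp only [Function.Embedding.coeFn_mk]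
      rw [happly j]
      have := hl (l.get j) (List.get_mem l j)
      omega
  rw [hsupp, Finset.map_val, Multiset.map_map]
  have huniv : (Finset.univ : Finset (Fin l.length)).val
      = ↑(List.finRange l.length) := by
    rw [Fin.univ_def]
  rw [huniv, Multiset.map_coe]
  congr 1
  conv_rhs => rw [← List.map_get_finRange l]
  apply List.map_congr_left
  intro j _
  simp only [Function.Embedding.coeFn_mk, Function.comp_apply]
  exact happly j

end Aux

/-- The operators `P_λ`, indexed by all partitions `λ` (including the
empty one) with at most `n` parts, are linearly independent in `End K[x_1,…,x_n]`. -/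
theorem steenrodPList_linearIndependent (K : Type) [Field K] [CharZero K] (q : K)
    (n : ℕ) (hn : 1 ≤ n) :
    LinearIndependent K
      (fun l : {l : List ℕ // l.Pairwise (· ≥ ·) ∧ (∀ x ∈ l, 1 ≤ x) ∧ l.length ≤ n} =>
        steenrodPList K q n l.1) := by
  classical
  rw [linearIndependent_iff]
  intro lc hlc
  by_contra hne
  have hsup : lc.support.Nonempty := Finsupp.support_nonempty_iff.2 hne
  obtain ⟨lam, hlam, hmax⟩ := Finset.exists_max_image lc.support (fun μ => μ.1.length) hsup
  -- the test vector
  set v := listToFinsupp lam.1 n with hvdef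
  have hmap : v.support.val.map v = ↑lam.1 :=
    listToFinsupp_map lam.1 lam.2.2.1 lam.2.2.2
  have hcard : v.support.card = lam.1.length := by
    have := congrArg Multiset.card hmap
    simpa using this
  -- evaluate the dependency at 1 and take the coefficient at v
  have h1 : ∑ μ ∈ lc.support, lc μ • steenrodPList K q n μ.1 = 0 := by
    rwa [Finsupp.linearCombination_apply, Finsupp.sum] at hlc
  have h2 : ∑ μ ∈ lc.support, lc μ • (steenrodPList K q n μ.1 (1 : MvPolynomial (Fin n) K))
      = 0 := by
    have := congrArg (fun T : Module.End K (MvPolynomial (Fin n) K) =>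
      T (1 : MvPolynomial (Fin n) K)) h1
    simpa [LinearMap.sum_apply] using this
  have h3 : ∑ μ ∈ lc.support, lc μ * coeff v (steenrodPList K q n μ.1 1) = 0 := by
    have := congrArg (coeff v) h2
    rw [coeff_sum] at this
    simpa [coeff_smul, smul_eq_mul] using this
  -- all terms except lam vanish
  have hvanish : ∀ μ ∈ lc.support, μ ≠ lam →
      lc μ * coeff v (steenrodPList K q n μ.1 1) = 0 := by
    intro μ hμ hμne
    rcases lt_or_eq_of_le (hmax μ hμ) with hlt | heq
    · rw [coeff_steenrodPList_eq_zero q μ.1 v (by omega), mul_zero]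
    · by_cases hc : coeff v (steenrodPList K q n μ.1 1) = 0
      · rw [hc, mul_zero]
      · exfalso
        have hm := multiset_eq_of_coeff_ne_zero q μ.1 μ.2.2.1 v (by omega) hc
        have hperm : List.Perm μ.1 lam.1 := by
          rw [hm] at hmap
          exact (Multiset.coe_eq_coe).1 hmap.symm |>.symm
        have : μ.1 = lam.1 := by
          apply List.Perm.eq_of_pairwise' μ.2.1 lam.2.1 hperm
        exact hμne (Subtype.ext this)
  rw [Finset.sum_eq_single lam hvanish (fun h => absurd hlam h)] at h3
  obtain ⟨N, hNpos, hNc⟩ := coeff_steenrodPList_self q lam.1 lam.2.2.1 v hmap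
  rw [hNc] at h3
  have hN0 : (N : K) ≠ 0 := Nat.cast_ne_zero.2 (by omega)
  have : lc lam = 0 := by
    rcases mul_eq_zero.1 h3 with h | h
    · exact h
    · exact absurd h hN0
  exact (Finsupp.mem_support_iff.1 hlam) this
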